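/- For every integer l ≥ 1 and all sufficiently small ε > 0, the star-like graph G_{l,ε} has highway dimension 2 according to the ball-intersection definition (for every r > 0 and every ball B_{2r}(t) there are at most 2 vertices hitting all shortest paths of length in (r, 2r] intersecting B_{2r}(t)). Moreover, for the scale r = 2, the set {v, w_1, …, w_l} is a minimal, locally 2-sparse shortest path cover for scale r (with c = 4), it contains l + 1 hubs, and each of these hubs is at distance at most 2r from some vertex of the ball B_{2r}(v). -/

import Mathlib

open SimpleGraph

universe u

variable {V : Type u}

/-- The length of a walk in a graph `G` with edge lengths `len`. -/
noncomputable def wlen {G : SimpleGraph V} (len : V → V → ℝ) {u v : V} (w : G.Walk u v) : ℝ :=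
  (w.darts.map (fun e => len e.toProd.1 e.toProd.2)).sum

/-- A walk is a *shortest path* (w.r.t. the shortest-path metric `d`) if it is a
path whose total length equals the distance between its endpoints. -/
def IsShortestPath {G : SimpleGraph V} (len d : V → V → ℝ) {u v : V}
    (w : G.Walk u v) : Prop :=
  w.IsPath ∧ wlen len w = d u v

/-- `d` is the shortest-path metric of the graph `G` with edge lengths `len`:
it is a lower bound on the length of every walk, and for every pair of vertices it
is attained by some path (a shortest path). -/
def IsShortestPathMetric (G : SimpleGraph V) (len d : V → V → ℝ) : Prop :=
  (∀ (u v : V) (w : G.Walk u v), d u v ≤ wlen len w) ∧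
  (∀ u v : V, ∃ w : G.Walk u v, IsShortestPath len d w)

/-- The closed ball `B_r(v)` of radius `r` around `v` (w.r.t. `d`). -/
def cball (d : V → V → ℝ) (v : V) (r : ℝ) : Set V := {u | d u v ≤ r}

/-- A *shortest path cover* for scale `r` (with parameter `c`): a set of hubs
hitting every shortest path of length in `(r, c*r/2]`. -/
def IsSPC (G : SimpleGraph V) (len d : V → V → ℝ) (c r : ℝ) (H : Set V) : Prop :=
  ∀ (u v : V) (w : G.Walk u v), IsShortestPath len d w →
    r < wlen len w → wlen len w ≤ c * r / 2 → ∃ h ∈ H, h ∈ w.support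

/-- A minimal shortest path cover: no proper subset is a shortest path cover. -/
def IsMinimalSPC (G : SimpleGraph V) (len d : V → V → ℝ) (c r : ℝ) (H : Set V) : Prop :=
  IsSPC G len d c r H ∧ ∀ H' : Set V, H' ⊂ H → ¬ IsSPC G len d c r H'

/-- `H` is locally `s`-sparse for scale `r`: every ball of radius `c*r/2` contains
at most `s` vertices of `H`. -/
def LocallySparse (d : V → V → ℝ) (c r : ℝ) (s : ℕ) (H : Set V) : Prop :=
  ∀ v : V, (H ∩ cball d v (c * r / 2)).ncard ≤ s

/-- Definition 1: the highway dimension of `G` is at most `k` if for every scale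
`r > 0` and every ball of radius `c*r`, there are at most `k` vertices in the ball
hitting all shortest paths of length more than `r` that lie inside the ball. -/
def HighwayDimLE (G : SimpleGraph V) (len d : V → V → ℝ) (c : ℝ) (k : ℕ) : Prop :=
  ∀ r : ℝ, 0 < r → ∀ v : V, ∃ H : Set V, H ⊆ cball d v (c * r) ∧ H.ncard ≤ k ∧
    ∀ (a b : V) (w : G.Walk a b), IsShortestPath len d w →
      (∀ x ∈ w.support, x ∈ cball d v (c * r)) → r < wlen len w →
      ∃ h ∈ H, h ∈ w.support

/-- The vertex set of the star-like graph `G_{l,ε}`: `none` is the centre `v`, and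
for each `i`, `some (i, 0) = u_i`, `some (i, 1) = w_i`, `some (i, 2) = x_i`,
`some (i, 3) = y_i`. -/
abbrev StarV (l : ℕ) := Option (Fin l × Fin 4)

/-- The star-like graph: edges `{v, u_i}`, `{u_i, w_i}`, `{w_i, x_i}`, `{w_i, y_i}`. -/
def starlike (l : ℕ) : SimpleGraph (StarV l) where
  Adj a b := ∃ i : Fin l,
    (a = none ∧ b = some (i, 0)) ∨ (b = none ∧ a = some (i, 0)) ∨
    (a = some (i, 0) ∧ b = some (i, 1)) ∨ (a = some (i, 1) ∧ b = some (i, 0)) ∨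
    (a = some (i, 1) ∧ b = some (i, 2)) ∨ (a = some (i, 2) ∧ b = some (i, 1)) ∨
    (a = some (i, 1) ∧ b = some (i, 3)) ∨ (a = some (i, 3) ∧ b = some (i, 1))
  symm := by
    constructor
    rintro a b ⟨i, h⟩
    exact ⟨i, by tauto⟩
  loopless := by
    constructor
    rintro a ⟨i, h⟩
    rcases h with ⟨h₁, h₂⟩ | ⟨h₁, h₂⟩ | ⟨h₁, h₂⟩ | ⟨h₁, h₂⟩ | ⟨h₁, h₂⟩ | ⟨h₁, h₂⟩ |
      ⟨h₁, h₂⟩ | ⟨h₁, h₂⟩ <;> simp_all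

/-- The edge lengths of the star-like graph: `{v, u_i}` has length `4`,
`{u_i, w_i}` has length `2ε`, `{w_i, x_i}` has length `1` and `{w_i, y_i}` has
length `1 + ε`. -/
noncomputable def starlikeLen (ε : ℝ) (l : ℕ) : StarV l → StarV l → ℝ :=
  fun a b =>
    match a, b with
    | none, _ => 4
    | _, none => 4
    | some (_, j), some (_, j') =>
      if (j = 0 ∧ j' = 1) ∨ (j = 1 ∧ j' = 0) then 2 * ε
      else if (j = 1 ∧ j' = 2) ∨ (j = 2 ∧ j' = 1) then 1
      else 1 + ε

/-- The shortest path cover `{v, w_1, …, w_l}` for scale `r = 2` in `G_{l,ε}`. -/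
def starlikeSPC (l : ℕ) : Set (StarV l) :=
  insert none {h : StarV l | ∃ i : Fin l, h = some (i, 1)}

section Aux

lemma wlen_nil {G : SimpleGraph V} (len : V → V → ℝ) (u : V) :
    wlen len (SimpleGraph.Walk.nil : G.Walk u u) = 0 := by simp [wlen]

lemma wlen_cons {G : SimpleGraph V} (len : V → V → ℝ) {u v w : V} (h : G.Adj u v)
    (p : G.Walk v w) : wlen len (SimpleGraph.Walk.cons h p) = len u v + wlen len p := by
  simp [wlen]

lemma wlen_append {G : SimpleGraph V} (len : V → V → ℝ) {u v w : V}
    (p : G.Walk u v) (q : G.Walk v w) :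
    wlen len (p.append q) = wlen len p + wlen len q := by
  simp [wlen, SimpleGraph.Walk.darts_append]

lemma wlen_reverse {G : SimpleGraph V} (len : V → V → ℝ)
    (hsym : ∀ a b, len a b = len b a) {u v : V} (p : G.Walk u v) :
    wlen len p.reverse = wlen len p := by
  simp only [wlen, SimpleGraph.Walk.darts_reverse, List.map_reverse, List.sum_reverse,
    List.map_map]
  congr 1
  apply List.map_congr_left
  intro dart _
  exact (hsym _ _)

lemma wlen_nonneg {G : SimpleGraph V} {len : V → V → ℝ}
    (hpos : ∀ a b, 0 ≤ len a b) {u v : V} (p : G.Walk u v) : 0 ≤ wlen len p := by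
  induction p with
  | nil => simp [wlen]
  | cons h p ih => rw [wlen_cons]; exact add_nonneg (hpos _ _) ih

/-- Potential function lower bound on walk lengths. -/
lemma potential_le_wlen {G : SimpleGraph V} {len : V → V → ℝ} (f : V → ℝ)
    (hf : ∀ a b, G.Adj a b → |f a - f b| ≤ len a b) {u v : V} (p : G.Walk u v) :
    |f u - f v| ≤ wlen len p := by
  induction p with
  | nil => simp [wlen]
  | @cons a c b h p ih =>
    rw [wlen_cons]
    calc |f a - f b| ≤ |f a - f c| + |f c - f b| := abs_sub_le _ _ _
    _ ≤ len a c + wlen len p := add_le_add (hf _ _ h) ih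

end Aux
section Star

/-- depth of branch vertices -/
noncomputable def dep (ε : ℝ) : Fin 4 → ℝ
  | 0 => 4
  | 1 => 4 + 2 * ε
  | 2 => 5 + 2 * ε
  | 3 => 5 + 3 * ε

/-- meet of two branch positions in the tree order -/
def mj (a b : Fin 4) : Fin 4 :=
  if a = 0 ∨ b = 0 then 0 else if a = 1 ∨ b = 1 then 1 else if a = b then a else 1

/-- the explicit shortest-path metric of the star-like graph -/
noncomputable def SD (ε : ℝ) {l : ℕ} : StarV l → StarV l → ℝ := fun a b =>
  match a, b with
  | none, none => 0
  | none, some (_, j) => dep ε j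
  | some (_, j), none => dep ε j
  | some (i, j), some (i', j') =>
      if i = i' then dep ε j + dep ε j' - 2 * dep ε (mj j j')
      else dep ε j + dep ε j'

lemma dep_nonneg {ε : ℝ} (hε : 0 ≤ ε) (j : Fin 4) : 0 ≤ dep ε j := by
  fin_cases j <;> simp [dep] <;> linarith

lemma dep_ge_four {ε : ℝ} (hε : 0 ≤ ε) (j : Fin 4) : 4 ≤ dep ε j := by
  fin_cases j <;> simp [dep] <;> linarith

lemma mj_self (j : Fin 4) : mj j j = j := by fin_cases j <;> rfl

lemma SD_self {ε : ℝ} {l : ℕ} (a : StarV l) : SD ε a a = 0 := by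
  rcases a with _ | ⟨i, j⟩
  · rfl
  · simp [SD, mj_self]; ring

lemma starlikeLen_symm (ε : ℝ) (l : ℕ) (a b : StarV l) :
    starlikeLen ε l a b = starlikeLen ε l b a := by
  rcases a with _ | ⟨i, j⟩ <;> rcases b with _ | ⟨i', j'⟩ <;> simp [starlikeLen] <;>
    split_ifs <;> tauto

lemma starlikeLen_nonneg {ε : ℝ} (hε : 0 ≤ ε) (l : ℕ) (a b : StarV l) :
    0 ≤ starlikeLen ε l a b := by
  rcases a with _ | ⟨i, j⟩ <;> rcases b with _ | ⟨i', j'⟩ <;> simp [starlikeLen] <;>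
    split_ifs <;> linarith

set_option maxHeartbeats 2000000 in
lemma SD_lip {ε : ℝ} (hε : 0 ≤ ε) {l : ℕ} (c a b : StarV l)
    (h : (starlike l).Adj a b) : |SD ε c a - SD ε c b| ≤ starlikeLen ε l a b := by
  obtain ⟨i, hcase⟩ := h
  rcases c with _ | ⟨k, m⟩
  · rcases hcase with ⟨h1, h2⟩ | ⟨h1, h2⟩ | ⟨h1, h2⟩ | ⟨h1, h2⟩ | ⟨h1, h2⟩ | ⟨h1, h2⟩ |
      ⟨h1, h2⟩ | ⟨h1, h2⟩ <;> subst h1 <;> subst h2 <;>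
      simp [SD, dep, starlikeLen, abs_le] <;> first | (constructor <;> linarith) | linarith
  · rcases hcase with ⟨h1, h2⟩ | ⟨h1, h2⟩ | ⟨h1, h2⟩ | ⟨h1, h2⟩ | ⟨h1, h2⟩ | ⟨h1, h2⟩ |
      ⟨h1, h2⟩ | ⟨h1, h2⟩ <;> subst h1 <;> subst h2 <;>
      by_cases hk : k = i <;> fin_cases m <;>
      simp [SD, dep, mj, starlikeLen, hk, abs_le] <;> first | (constructor <;> linarith) | linarith

end Star
section Walks

variable {l : ℕ}

lemma adj_uv (i : Fin l) : (starlike l).Adj (some (i, 0)) none := ⟨i, by tauto⟩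
lemma adj_wu (i : Fin l) : (starlike l).Adj (some (i, 1)) (some (i, 0)) := ⟨i, by tauto⟩
lemma adj_uw (i : Fin l) : (starlike l).Adj (some (i, 0)) (some (i, 1)) := ⟨i, by tauto⟩
lemma adj_xw (i : Fin l) : (starlike l).Adj (some (i, 2)) (some (i, 1)) := ⟨i, by tauto⟩
lemma adj_yw (i : Fin l) : (starlike l).Adj (some (i, 3)) (some (i, 1)) := ⟨i, by tauto⟩
lemma adj_wx (i : Fin l) : (starlike l).Adj (some (i, 1)) (some (i, 2)) := ⟨i, by tauto⟩
lemma adj_wy (i : Fin l) : (starlike l).Adj (some (i, 1)) (some (i, 3)) := ⟨i, by tauto⟩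

/-- the walk from a branch vertex down to the centre -/
def pwalk (i : Fin l) : (j : Fin 4) → (starlike l).Walk (some (i, j)) none
  | ⟨0, _⟩ => .cons (adj_uv i) .nil
  | ⟨1, _⟩ => .cons (adj_wu i) (.cons (adj_uv i) .nil)
  | ⟨2, _⟩ => .cons (adj_xw i) (.cons (adj_wu i) (.cons (adj_uv i) .nil))
  | ⟨3, _⟩ => .cons (adj_yw i) (.cons (adj_wu i) (.cons (adj_uv i) .nil))

/-- the walk from a branch vertex to the branching vertex w_i -/
def qwalk (i : Fin l) : (j : Fin 4) → (starlike l).Walk (some (i, j)) (some (i, 1))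
  | ⟨0, _⟩ => .cons (adj_uw i) .nil
  | ⟨1, _⟩ => .nil
  | ⟨2, _⟩ => .cons (adj_xw i) .nil
  | ⟨3, _⟩ => .cons (adj_yw i) .nil

lemma wlen_pwalk (ε : ℝ) (i : Fin l) (j : Fin 4) :
    wlen (starlikeLen ε l) (pwalk i j) = dep ε j := by
  fin_cases j <;> simp [pwalk, wlen, starlikeLen, dep] <;> ring

lemma wlen_qwalk (ε : ℝ) (i : Fin l) (j : Fin 4) :
    wlen (starlikeLen ε l) (qwalk i j) = dep ε j - dep ε 1 + (if j = 0 then 4 * ε else 0) := by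
  fin_cases j <;> simp [qwalk, wlen, starlikeLen, dep] <;> ring

lemma SD_nonneg {ε : ℝ} (hε : 0 ≤ ε) (a b : StarV l) : 0 ≤ SD ε a b := by
  rcases a with _ | ⟨i, j⟩ <;> rcases b with _ | ⟨i', j'⟩
  · simp [SD]
  · exact dep_nonneg hε _
  · exact dep_nonneg hε _
  · by_cases hi : i = i'
    · subst hi
      fin_cases j <;> fin_cases j' <;> simp [SD, dep, mj] <;> linarith
    · have := dep_nonneg hε j; have := dep_nonneg hε j'
      simp [SD, hi]; linarith

lemma dist_eq {ε : ℝ} (hε : 0 ≤ ε) {d : StarV l → StarV l → ℝ}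
    (hmet : IsShortestPathMetric (starlike l) (starlikeLen ε l) d) :
    ∀ u v : StarV l, d u v = SD ε u v := by
  intro u v
  have hle : d u v ≤ SD ε u v := by
    rcases u with _ | ⟨i, j⟩ <;> rcases v with _ | ⟨i', j'⟩
    · simpa [SD, wlen] using hmet.1 none none .nil
    · have := hmet.1 none (some (i', j')) (pwalk i' j').reverse
      rwa [wlen_reverse _ (starlikeLen_symm ε l), wlen_pwalk] at this
    · have := hmet.1 (some (i, j)) none (pwalk i j)
      rwa [wlen_pwalk] at this
    · by_cases hi : i = i'
      · subst hi
        by_cases hj : j = j'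
        · subst hj
          have := hmet.1 (some (i, j)) (some (i, j)) .nil
          simp [wlen] at this
          rw [SD_self]; exact this
        · have := hmet.1 (some (i, j)) (some (i, j'))
            ((qwalk i j).append (qwalk i j').reverse)
          rw [wlen_append, wlen_reverse _ (starlikeLen_symm ε l), wlen_qwalk,
            wlen_qwalk] at this
          refine this.trans (le_of_eq ?_)
          fin_cases j <;> fin_cases j' <;> simp_all [SD, dep, mj] <;> ring
      · have := hmet.1 (some (i, j)) (some (i', j'))
          ((pwalk i j).append (pwalk i' j').reverse)
        rw [wlen_append, wlen_reverse _ (starlikeLen_symm ε l), wlen_pwalk,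
          wlen_pwalk] at this
        simpa [SD, hi] using this
  have hge : SD ε u v ≤ d u v := by
    obtain ⟨w, _, hw⟩ := hmet.2 u v
    have := potential_le_wlen (SD ε u) (fun a b hab => SD_lip hε u a b hab) w
    rw [hw, SD_self] at this
    calc SD ε u v = |0 - SD ε u v| := by rw [abs_sub_comm, sub_zero, abs_of_nonneg (SD_nonneg hε _ _)]
    _ ≤ d u v := this
  linarith

end Walks
section Struct

variable {l : ℕ}

lemma adj_some_some {i i' : Fin l} {j j' : Fin 4}
    (h : (starlike l).Adj (some (i, j)) (some (i', j'))) : i' = i := by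
  obtain ⟨k, hc⟩ := h
  rcases hc with ⟨h1, h2⟩ | ⟨h1, h2⟩ | ⟨h1, h2⟩ | ⟨h1, h2⟩ | ⟨h1, h2⟩ | ⟨h1, h2⟩ |
    ⟨h1, h2⟩ | ⟨h1, h2⟩ <;> simp_all

lemma adj_x_forces {i : Fin l} {j : Fin 4} (hj : j = 2 ∨ j = 3) {c : StarV l}
    (h : (starlike l).Adj (some (i, j)) c) : c = some (i, 1) := by
  obtain ⟨k, hc⟩ := h
  rcases hj with rfl | rfl <;>
  rcases hc with ⟨h1, h2⟩ | ⟨h1, h2⟩ | ⟨h1, h2⟩ | ⟨h1, h2⟩ | ⟨h1, h2⟩ | ⟨h1, h2⟩ |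
    ⟨h1, h2⟩ | ⟨h1, h2⟩ <;> simp_all <;> omega

/-- a walk avoiding the centre stays within its branch -/
lemma walk_branch {a b : StarV l} (w : (starlike l).Walk a b)
    (hnone : none ∉ w.support) (i : Fin l) (ha : ∃ j : Fin 4, a = some (i, j)) :
    ∀ x ∈ w.support, ∃ j' : Fin 4, x = some (i, j') := by
  induction w with
  | nil =>
    intro x hx
    rw [SimpleGraph.Walk.support_nil] at hx
    simp at hx
    obtain ⟨j, hj⟩ := ha
    exact ⟨j, by rw [hx, hj]⟩
  | @cons u c v h p ih =>
    obtain ⟨j, rfl⟩ := ha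
    rw [SimpleGraph.Walk.support_cons] at hnone ⊢
    have hnone' : none ∉ p.support := fun hn => hnone (List.mem_cons_of_mem _ hn)
    have hcnone : c ≠ none := fun hc => hnone' (hc ▸ p.start_mem_support)
    obtain ⟨⟨i₂, j₂⟩, hc⟩ := Option.ne_none_iff_exists'.mp hcnone
    subst hc
    have hi2 : i₂ = i := adj_some_some h
    subst hi2
    intro x hx
    rcases List.mem_cons.mp hx with rfl | hx
    · exact ⟨j, rfl⟩
    · exact ih hnone' ⟨j₂, rfl⟩ x hx

/-- any walk between different branches passes the centre -/
lemma walk_cross {i i' : Fin l} {j j' : Fin 4} (hne : i ≠ i')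
    (w : (starlike l).Walk (some (i, j)) (some (i', j'))) : none ∈ w.support := by
  by_contra hn
  obtain ⟨j'', hj''⟩ := walk_branch w hn i ⟨j, rfl⟩ _ w.end_mem_support
  simp at hj''
  exact hne hj''.1.symm

/-- a nontrivial walk starting at x_i or y_i visits w_i -/
lemma walk_force {i : Fin l} {j : Fin 4} (hj : j = 2 ∨ j = 3) {b : StarV l}
    (hne : some (i, j) ≠ b) (w : (starlike l).Walk (some (i, j)) b) :
    some (i, 1) ∈ w.support := by
  cases w with
  | nil => exact absurd rfl hne
  | @cons _ c _ h p =>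
    have := adj_x_forces hj h
    subst this
    rw [SimpleGraph.Walk.support_cons]
    exact List.mem_cons_of_mem _ p.start_mem_support

/-- vertices on a shortest path are metrically between the endpoints -/
lemma btw {ε : ℝ} {d : StarV l → StarV l → ℝ}
    (hmet : IsShortestPathMetric (starlike l) (starlikeLen ε l) d)
    {a b : StarV l} (w : (starlike l).Walk a b)
    (hsp : IsShortestPath (starlikeLen ε l) d w) {x : StarV l} (hx : x ∈ w.support) :
    d a x + d x b = d a b := by
  obtain ⟨q, r, rfl⟩ := SimpleGraph.Walk.mem_support_iff_exists_append.mp hx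
  have h1 : d a x ≤ wlen (starlikeLen ε l) q := hmet.1 _ _ q
  have h2 : d x b ≤ wlen (starlikeLen ε l) r := hmet.1 _ _ r
  have htri : d a b ≤ d a x + d x b := by
    obtain ⟨q1, _, hq1⟩ := hmet.2 a x
    obtain ⟨q2, _, hq2⟩ := hmet.2 x b
    have := hmet.1 a b (q1.append q2)
    rwa [wlen_append, hq1, hq2] at this
  have hab : wlen (starlikeLen ε l) q + wlen (starlikeLen ε l) r = d a b := by
    rw [← wlen_append]; exact hsp.2
  linarith

end Struct
set_option maxHeartbeats 4000000

/-- Lemma 45 of the paper: for every `l ≥ 1` and all sufficiently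
small `ε > 0`, the star-like graph `G_{l,ε}` has highway dimension `2` according to
the ball-intersection definition of Abraham et al. 2011, while for the scale `r = 2`
(with `c = 4`) the set `{v, w_1, …, w_l}` is a minimal, locally `2`-sparse shortest
path cover of `l + 1` hubs, each at distance at most `2r` from some vertex of the
ball `B_{2r}(v)`. -/
theorem statement16 (l : ℕ) (hl : 1 ≤ l) :
    ∃ ε₀ : ℝ, 0 < ε₀ ∧ ∀ ε : ℝ, 0 < ε → ε ≤ ε₀ →
      ∀ d : StarV l → StarV l → ℝ,
        IsShortestPathMetric (starlike l) (starlikeLen ε l) d →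
        ((∀ r : ℝ, 0 < r → ∀ t : StarV l,
            ∃ H : Set (StarV l), H.ncard ≤ 2 ∧
              ∀ (a b : StarV l) (w : (starlike l).Walk a b),
                IsShortestPath (starlikeLen ε l) d w →
                r < wlen (starlikeLen ε l) w → wlen (starlikeLen ε l) w ≤ 2 * r →
                (∃ x ∈ w.support, x ∈ cball d t (2 * r)) →
                ∃ h ∈ H, h ∈ w.support) ∧
          IsMinimalSPC (starlike l) (starlikeLen ε l) d 4 2 (starlikeSPC l) ∧
          LocallySparse d 4 2 2 (starlikeSPC l) ∧
          (starlikeSPC l).ncard = l + 1 ∧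
          (∀ h ∈ starlikeSPC l,
            ∃ z ∈ cball d (none : StarV l) (2 * 2), d h z ≤ 2 * 2)) := by
  refine ⟨1/100, by norm_num, ?_⟩
  intro ε hε hε' d hmet
  have hε0 : (0:ℝ) ≤ ε := le_of_lt hε
  have hd : ∀ u v, d u v = SD ε u v := dist_eq hε0 hmet
  have hubv : (none : StarV l) ∈ starlikeSPC l := Set.mem_insert _ _
  have hubw : ∀ i : Fin l, some (i, 1) ∈ starlikeSPC l :=
    fun i => Set.mem_insert_iff.mpr (Or.inr ⟨i, rfl⟩)
  have dge4 : ∀ (i : Fin l) (j : Fin 4), 4 ≤ d (some (i, j)) none := by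
    intro i j; rw [hd]; exact dep_ge_four hε0 j
  have dge4' : ∀ (i : Fin l) (j : Fin 4), 4 ≤ d none (some (i, j)) := by
    intro i j; rw [hd]; exact dep_ge_four hε0 j
  have dcross : ∀ (i i' : Fin l) (j j' : Fin 4), i ≠ i' →
      8 ≤ d (some (i, j)) (some (i', j')) := by
    intro i i' j j' hne
    rw [hd]
    have := dep_ge_four hε0 j
    have := dep_ge_four hε0 j'
    simp [SD, hne]; linarith
  have dsame_le : ∀ (i : Fin l) (j j' : Fin 4),
      d (some (i, j)) (some (i, j')) ≤ 2 + ε := by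
    intro i j j'
    rw [hd]
    fin_cases j <;> fin_cases j' <;> simp [SD, dep, mj] <;> linarith
  refine ⟨?_, ⟨?_, ?_⟩, ?_, ?_, ?_⟩
  · -- highway dimension 2
    intro r hr t
    have KEY : ∀ (a b : StarV l) (w : (starlike l).Walk a b),
        IsShortestPath (starlikeLen ε l) d w →
        r < wlen (starlikeLen ε l) w → wlen (starlikeLen ε l) w ≤ 2 * r →
        (∃ x ∈ w.support, x ∈ cball d t (2 * r)) →
        (none ∈ w.support ∨
          ∃ (k : Fin l) (mt : Fin 4), t = some (k, mt) ∧ some (k, 1) ∈ w.support) := by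
      intro a b w hsp h1 h2 ⟨x0, hx0s, hx0b⟩
      have hwl : wlen (starlikeLen ε l) w = d a b := hsp.2
      rw [hwl] at h1 h2
      rcases a with _ | ⟨i, j⟩
      · exact Or.inl w.start_mem_support
      rcases b with _ | ⟨i', j'⟩
      · exact Or.inl w.end_mem_support
      by_cases hi : i = i'
      swap
      · exact Or.inl (walk_cross hi w)
      subst hi
      have hxb : d x0 t ≤ 2 * r := hx0b
      have hbtw := btw hmet w hsp hx0s
      have hle : d (some (i, j)) (some (i, j')) ≤ 2 + ε := dsame_le i j j'
      have dnn : ∀ u v : StarV l, 0 ≤ d u v := by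
        intro u v; rw [hd]; exact SD_nonneg hε0 u v
      -- x0 lies on branch i
      obtain ⟨m, rfl⟩ : ∃ m : Fin 4, x0 = some (i, m) := by
        rcases x0 with _ | ⟨kx, m⟩
        · exfalso
          linarith [dge4 i j, dge4' i j', hbtw, hle]
        · by_cases hkx : kx = i
          · exact ⟨m, by rw [hkx]⟩
          · exfalso
            have h8 : 8 ≤ d (some (i, j)) (some (kx, m)) :=
              dcross i kx j m (fun h => hkx h.symm)
            have := dnn (some (kx, m)) (some (i, j'))
            linarith
      rcases t with _ | ⟨kt, mt⟩
      · -- t is the centre: impossible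
        exfalso
        have B3 : dep ε m ≤ 2 * r := by rw [hd] at hxb; simpa [SD] using hxb
        have hr2 : 2 ≤ r := by have := dep_ge_four hε0 m; linarith
        have B4 : r < SD ε (some (i, j)) (some (i, j')) := by rw [← hd]; exact h1
        have B2 : 2 < SD ε (some (i, j)) (some (i, j')) := by rw [← hd]; linarith
        have B1 : SD ε (some (i, j)) (some (i, m)) + SD ε (some (i, m)) (some (i, j'))
            = SD ε (some (i, j)) (some (i, j')) := by rw [← hd, ← hd, ← hd]; exact hbtw
        fin_cases j <;> fin_cases j' <;> fin_cases m <;>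
          simp [SD, dep, mj] at B1 B2 B3 B4 ⊢ <;> linarith
      · by_cases hkt : kt = i
        swap
        · exfalso
          have h8 : 8 ≤ d (some (i, m)) (some (kt, mt)) :=
            dcross i kt m mt (fun h => hkt h.symm)
          linarith
        subst hkt
        refine Or.inr ⟨kt, mt, rfl, ?_⟩
        have hjj : j ≠ j' := by
          intro h
          subst h
          rw [hd, SD_self] at h1
          linarith
        have hne : (some (kt, j) : StarV l) ≠ some (kt, j') := by
          simp [hjj]
        fin_cases j <;> fin_cases j' <;>
          first
            | exact absurd rfl hjj
            | exact w.start_mem_support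
            | exact w.end_mem_support
            | exact walk_force (Or.inl rfl) hne w
            | exact walk_force (Or.inr rfl) hne w
            | (have H5 := walk_force (Or.inl rfl) (Ne.symm hne) w.reverse;
               rw [SimpleGraph.Walk.support_reverse, List.mem_reverse] at H5;
               exact H5)
            | (have H5 := walk_force (Or.inr rfl) (Ne.symm hne) w.reverse;
               rw [SimpleGraph.Walk.support_reverse, List.mem_reverse] at H5;
               exact H5)
    rcases t with _ | ⟨k, mt⟩
    · refine ⟨{none}, by simp, ?_⟩
      intro a b w hsp h1 h2 hball
      rcases KEY a b w hsp h1 h2 hball with hn | ⟨k, mt, ht, _⟩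
      · exact ⟨none, rfl, hn⟩
      · exact absurd ht (by simp)
    · refine ⟨{none, some (k, 1)}, ?_, ?_⟩
      · exact le_trans (Set.ncard_insert_le _ _) (by simp)
      · intro a b w hsp h1 h2 hball
        rcases KEY a b w hsp h1 h2 hball with hn | ⟨k', mt', ht, hm⟩
        · exact ⟨none, Or.inl rfl, hn⟩
        · have : k' = k := by
            injection ht with ht'
            exact (Prod.mk.injEq .. ▸ ht' : (k:Fin l) = k' ∧ _).1.symm
          subst this
          exact ⟨some (k', 1), Set.mem_insert_of_mem _ (Set.mem_singleton _), hm⟩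
  · -- SPC
    intro a b w hsp h1 h2
    have hwl : wlen (starlikeLen ε l) w = d a b := hsp.2
    rw [hwl] at h1 h2
    norm_num at h2
    rcases a with _ | ⟨i, j⟩
    · exact ⟨none, hubv, w.start_mem_support⟩
    rcases b with _ | ⟨i', j'⟩
    · exact ⟨none, hubv, w.end_mem_support⟩
    by_cases hi : i = i'
    swap
    · exfalso; have := dcross i i' j j' hi; linarith
    subst hi
    have hjj : j ≠ j' := by
      intro h; subst h; rw [hd, SD_self] at h1; linarith
    have hne : (some (i, j) : StarV l) ≠ some (i, j') := by simp [hjj]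
    have B2 : 2 < SD ε (some (i, j)) (some (i, j')) := by rw [← hd]; exact h1
    fin_cases j <;> fin_cases j' <;>
      first
        | exact absurd rfl hjj
        | exact ⟨some (i, 1), hubw i, walk_force (Or.inl rfl) hne w⟩
        | exact ⟨some (i, 1), hubw i, walk_force (Or.inr rfl) hne w⟩
        | (exfalso; simp [SD, dep, mj] at B2 <;> linarith)
  · -- minimality
    intro H' hss hspc
    obtain ⟨e, heH, heH'⟩ := Set.exists_of_ssubset hss
    have hsub := hss.1
    rcases heH with rfl | ⟨i, rfl⟩
    · -- the centre is missing from H'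
      let i0 : Fin l := ⟨0, hl⟩
      let W : (starlike l).Walk none (some (i0, 0)) := .cons (adj_uv i0).symm .nil
      have hWlen : wlen (starlikeLen ε l) W = 4 := by simp [W, wlen, starlikeLen]
      have hWd : d none (some (i0, 0)) = 4 := by rw [hd]; simp [SD, dep]
      have hWpath : W.IsPath := by simp [W, SimpleGraph.Walk.isPath_def]
      obtain ⟨h, hh1, hh2⟩ := hspc none (some (i0, 0)) W ⟨hWpath, by rw [hWlen, hWd]⟩
        (by rw [hWlen]; norm_num) (by rw [hWlen]; norm_num)
      have : h ∈ W.support := hh2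
      simp [W] at this
      rcases hsub hh1 with rfl | ⟨k, rfl⟩
      · exact heH' hh1
      · rcases this with h1 | h1 <;> simp at h1
    · -- some w_i is missing from H'
      let W : (starlike l).Walk (some (i, 2)) (some (i, 3)) :=
        .cons (adj_xw i) (.cons (adj_wy i) .nil)
      have hWlen : wlen (starlikeLen ε l) W = 2 + ε := by
        simp [W, wlen, starlikeLen]; ring
      have hWd : d (some (i, 2)) (some (i, 3)) = 2 + ε := by
        rw [hd]; simp [SD, dep, mj]; ring
      have hWpath : W.IsPath := by simp [W, SimpleGraph.Walk.isPath_def]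
      obtain ⟨h, hh1, hh2⟩ := hspc (some (i, 2)) (some (i, 3)) W
        ⟨hWpath, by rw [hWlen, hWd]⟩
        (by rw [hWlen]; linarith) (by rw [hWlen]; norm_num; linarith)
      have hsupp : h ∈ W.support := hh2
      rcases hsub hh1 with rfl | ⟨k, rfl⟩
      · simp [W] at hsupp
      · simp [W] at hsupp
        rw [hsupp] at hh1
        exact heH' hh1
  · -- locally sparse
    intro t
    rcases t with _ | ⟨k, mt⟩
    · have hsub : starlikeSPC l ∩ cball d none (4 * 2 / 2) ⊆ {(none : StarV l)} := by
        rintro x ⟨hx1, hx2⟩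
        rcases hx1 with rfl | ⟨i, rfl⟩
        · rfl
        · exfalso
          have : d (some (i, 1)) none ≤ 4 := by norm_num at hx2 ⊢; exact hx2
          rw [hd] at this
          simp [SD, dep] at this
          linarith
      exact le_trans (Set.ncard_le_ncard hsub (Set.finite_singleton _)) (by simp)
    · have hsub : starlikeSPC l ∩ cball d (some (k, mt)) (4 * 2 / 2) ⊆
          {(none : StarV l), some (k, 1)} := by
        rintro x ⟨hx1, hx2⟩
        rcases hx1 with rfl | ⟨i, rfl⟩
        · exact Or.inl rfl
        · by_cases hik : i = k
          · subst hik; exact Set.mem_insert_of_mem _ (Set.mem_singleton _)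
          · exfalso
            have : d (some (i, 1)) (some (k, mt)) ≤ 4 := by norm_num at hx2 ⊢; exact hx2
            have := dcross i k 1 mt hik
            linarith
      refine le_trans (Set.ncard_le_ncard hsub (Set.toFinite _)) ?_
      exact le_trans (Set.ncard_insert_le _ _) (by simp)
  · -- cardinality
    have hS : {h : StarV l | ∃ i : Fin l, h = some (i, 1)} =
        Set.range (fun i : Fin l => (some (i, 1) : StarV l)) := by
      ext x; constructor
      · rintro ⟨i, rfl⟩; exact ⟨i, rfl⟩
      · rintro ⟨i, rfl⟩; exact ⟨i, rfl⟩
    have hninj : Function.Injective (fun i : Fin l => (some (i, 1) : StarV l)) := by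
      intro a b hab; simpa using hab
    rw [starlikeSPC, Set.ncard_insert_of_notMem (by rintro ⟨i, h⟩; simp at h)
      (Set.toFinite _), hS, ← Nat.card_coe_set_eq, Nat.card_range_of_injective hninj]
    simp
  · -- hubs near the ball
    intro h hmem
    rcases hmem with rfl | ⟨i, rfl⟩
    · refine ⟨none, ?_, ?_⟩ <;> · show d _ _ ≤ _; rw [hd, SD_self]; norm_num
    · refine ⟨some (i, 0), ?_, ?_⟩
      · show d _ _ ≤ _; rw [hd]; simp [SD, dep]; norm_num
      · rw [hd]; simp [SD, dep, mj]; linarith
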